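/- Let p, q be integers with p ≥ 2 and q ≥ 2, and let G be the simple graph on the vertex type Fin p ⊕ Fin q in which u_i is adjacent to v_j if and only if the pair (i, j) belongs to the (p,q)-broom edge set E', and no two left vertices and no two right vertices are adjacent. Then G is a tree (i.e., G is connected and acyclic); in particular it has p + q vertices and p + q − 1 edges. -/

import Mathlib

/-- `f i = ⌊((i-1)(q-1))/(p-1)⌋ + 1`, floor taken over the rationals. -/
def broomF (p q i : ℤ) : ℤ := ⌊(((i : ℚ) - 1) * ((q : ℚ) - 1)) / ((p : ℚ) - 1)⌋ + 1

/-- `g j = ⌈((j-1)(p-1))/(q-1)⌉`, ceiling taken over the rationals. -/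
def broomG (p q j : ℤ) : ℤ := ⌈(((j : ℚ) - 1) * ((p : ℚ) - 1)) / ((q : ℚ) - 1)⌉

/-- `(i, j)` is an edge of the `(p,q)`-broom (1-based indices). -/
def broomEdge (p q i j : ℤ) : Prop :=
  (1 ≤ i ∧ i ≤ p ∧ j = broomF p q i) ∨ (2 ≤ j ∧ j ≤ q ∧ i = broomG p q j)

/-- The `(p,q)`-broom as a simple graph on `Fin p ⊕ Fin q`: the `i`-th left vertex is
adjacent to the `j`-th right vertex iff `(i, j)` (1-based) is a broom edge, and no two
vertices on the same side are adjacent. -/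
def broomGraph (p q : ℕ) : SimpleGraph (Fin p ⊕ Fin q) where
  Adj x y :=
    ∃ (i : Fin p) (j : Fin q),
      ((x = Sum.inl i ∧ y = Sum.inr j) ∨ (x = Sum.inr j ∧ y = Sum.inl i)) ∧
      broomEdge (p : ℤ) (q : ℤ) ((i : ℤ) + 1) ((j : ℤ) + 1)
  symm := by
    constructor
    rintro x y ⟨i, j, (⟨h1, h2⟩ | ⟨h1, h2⟩), he⟩
    · exact ⟨i, j, Or.inr ⟨h2, h1⟩, he⟩
    · exact ⟨i, j, Or.inl ⟨h2, h1⟩, he⟩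
  loopless := by
    constructor
    rintro x ⟨i, j, (⟨h1, h2⟩ | ⟨h1, h2⟩), -⟩ <;> subst h1 <;> simp at h2

lemma broomF_bounds {p q i : ℤ} (hp : 2 ≤ p) (hq : 2 ≤ q) (hi1 : 1 ≤ i) (hip : i ≤ p) :
    1 ≤ broomF p q i ∧ broomF p q i ≤ q := by
  have hp1 : (0:ℚ) < (p:ℚ) - 1 := by
    have : (2:ℚ) ≤ (p:ℚ) := by exact_mod_cast hp
    linarith
  have hq1 : (0:ℚ) ≤ (q:ℚ) - 1 := by
    have : (2:ℚ) ≤ (q:ℚ) := by exact_mod_cast hq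
    linarith
  have hi1' : (1:ℚ) ≤ (i:ℚ) := by exact_mod_cast hi1
  have hip' : (i:ℚ) ≤ (p:ℚ) := by exact_mod_cast hip
  constructor
  · have : (0:ℤ) ≤ ⌊(((i : ℚ) - 1) * ((q : ℚ) - 1)) / ((p : ℚ) - 1)⌋ :=
      Int.floor_nonneg.mpr (div_nonneg (mul_nonneg (by linarith) hq1) hp1.le)
    unfold broomF; omega
  · have hle : (((i : ℚ) - 1) * ((q : ℚ) - 1)) / ((p : ℚ) - 1) ≤ ((q - 1 : ℤ) : ℚ) := by
      rw [div_le_iff₀ hp1]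
      push_cast
      nlinarith
    have := (Int.floor_mono hle).trans_eq (Int.floor_intCast _)
    unfold broomF; omega

lemma broomF_key {p q i : ℤ} (hp : 2 ≤ p) :
    (broomF p q i - 1) * (p - 1) ≤ (i - 1) * (q - 1) := by
  have hp1 : (0:ℚ) < (p:ℚ) - 1 := by
    have : (2:ℚ) ≤ (p:ℚ) := by exact_mod_cast hp
    linarith
  have h1 : ((broomF p q i - 1 : ℤ) : ℚ) ≤ (((i : ℚ) - 1) * ((q : ℚ) - 1)) / ((p : ℚ) - 1) := by
    unfold broomF
    push_cast
    have := Int.floor_le ((((i : ℚ) - 1) * ((q : ℚ) - 1)) / ((p : ℚ) - 1))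
    linarith
  have h2 : ((broomF p q i - 1 : ℤ) : ℚ) * ((p:ℚ) - 1) ≤ ((i : ℚ) - 1) * ((q : ℚ) - 1) := by
    have := mul_le_mul_of_nonneg_right h1 hp1.le
    rwa [div_mul_cancel₀ _ hp1.ne'] at this
  have h3 : ((broomF p q i - 1 : ℤ) : ℚ) * ((p:ℚ) - 1)
      = (((broomF p q i - 1) * (p - 1) : ℤ) : ℚ) := by
    push_cast; ring
  rw [h3] at h2
  exact_mod_cast h2

lemma broomG_bounds {p q j : ℤ} (hp : 2 ≤ p) (hq : 2 ≤ q) (hj2 : 2 ≤ j) (hjq : j ≤ q) :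
    1 ≤ broomG p q j ∧ broomG p q j ≤ p := by
  have hq1 : (0:ℚ) < (q:ℚ) - 1 := by
    have : (2:ℚ) ≤ (q:ℚ) := by exact_mod_cast hq
    linarith
  have hp1 : (0:ℚ) < (p:ℚ) - 1 := by
    have : (2:ℚ) ≤ (p:ℚ) := by exact_mod_cast hp
    linarith
  have hj2' : (2:ℚ) ≤ (j:ℚ) := by exact_mod_cast hj2
  have hjq' : (j:ℚ) ≤ (q:ℚ) := by exact_mod_cast hjq
  constructor
  · have : (0:ℤ) < ⌈(((j : ℚ) - 1) * ((p : ℚ) - 1)) / ((q : ℚ) - 1)⌉ :=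
      Int.ceil_pos.mpr (div_pos (mul_pos (by linarith) hp1) hq1)
    unfold broomG; omega
  · have hle : (((j : ℚ) - 1) * ((p : ℚ) - 1)) / ((q : ℚ) - 1) ≤ ((p : ℤ) : ℚ) := by
      rw [div_le_iff₀ hq1]
      nlinarith
    have := Int.ceil_le.mpr hle
    unfold broomG; omega

lemma broomG_key {p q j : ℤ} (hq : 2 ≤ q) :
    (broomG p q j - 1) * (q - 1) < (j - 1) * (p - 1) := by
  have hq1 : (0:ℚ) < (q:ℚ) - 1 := by
    have : (2:ℚ) ≤ (q:ℚ) := by exact_mod_cast hq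
    linarith
  have h1 : ((broomG p q j - 1 : ℤ) : ℚ) < (((j : ℚ) - 1) * ((p : ℚ) - 1)) / ((q : ℚ) - 1) := by
    unfold broomG
    push_cast
    have := Int.ceil_lt_add_one ((((j : ℚ) - 1) * ((p : ℚ) - 1)) / ((q : ℚ) - 1))
    linarith
  have h2 : ((broomG p q j - 1 : ℤ) : ℚ) * ((q:ℚ) - 1) < ((j : ℚ) - 1) * ((p : ℚ) - 1) := by
    have := mul_lt_mul_of_pos_right h1 hq1
    rwa [div_mul_cancel₀ _ hq1.ne'] at this
  have h3 : ((broomG p q j - 1 : ℤ) : ℚ) * ((q:ℚ) - 1)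
      = (((broomG p q j - 1) * (q - 1) : ℤ) : ℚ) := by
    push_cast; ring
  rw [h3] at h2
  exact_mod_cast h2

open SimpleGraph Walk in
lemma isAcyclic_of_parent {V : Type*} {G : SimpleGraph V} (parent : V → V) (rank : V → ℕ)
    (h : ∀ ⦃a b⦄, G.Adj a b →
      (b = parent a ∧ rank b < rank a) ∨ (a = parent b ∧ rank a < rank b)) :
    G.IsAcyclic := by
  classical
  intro v c hc
  obtain ⟨u, hu, hmax⟩ := c.support.toFinset.exists_max_image rank
    ⟨v, List.mem_toFinset.mpr c.start_mem_support⟩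
  rw [List.mem_toFinset] at hu
  have hmax' : ∀ x ∈ c.support, rank x ≤ rank u := fun x hx =>
    hmax x (List.mem_toFinset.mpr hx)
  have hsup : ∀ x, x ∈ (c.rotate u hu).support → x ∈ c.support := by
    intro x hx
    rw [Walk.support_eq_cons] at hx
    rcases List.mem_cons.mp hx with rfl | hx
    · exact hu
    · have := (Walk.support_rotate c u hu).mem_iff.mp hx
      rw [Walk.support_eq_cons]
      exact List.mem_cons_of_mem _ this
  have hc' := hc.rotate hu
  cases hw : c.rotate u hu with
  | nil =>
    rw [hw] at hc'
    exact hc'.ne_nil rfl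
  | @cons _ a _ hadj q =>
    rw [hw] at hc' hsup
    have ha : a ∈ c.support := hsup a (by simp [Walk.support_cons])
    have h1 : a = parent u ∧ rank a < rank u := by
      rcases h hadj with h' | h'
      · exact h'
      · exact absurd (hmax' a ha) (by omega)
    obtain ⟨b, d, hadj', hbu⟩ := Walk.exists_cons_eq_concat hadj q
    have hb : b ∈ c.support := by
      apply hsup
      rw [hbu, Walk.support_concat]
      exact List.mem_append_left _ d.end_mem_support
    have h2 : b = parent u ∧ rank b < rank u := by
      rcases h hadj' with h' | h'
      · exact absurd (hmax' b hb) (by omega)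
      · exact h'
    have hab : a = b := h1.1.trans h2.1.symm
    have hnd : (Walk.cons hadj q).edges.Nodup := hc'.edges_nodup
    have hE : s(u, a) :: q.edges = d.edges ++ [s(b, u)] := by
      have := congrArg Walk.edges hbu
      rwa [Walk.edges_cons, Walk.edges_concat, List.concat_eq_append] at this
    have hqne : q.edges ≠ [] := by
      intro hnil
      have hl : q.length = 0 := by
        have := congrArg List.length hnil
        simpa [Walk.length_edges] using this
      have hau : a = u := Walk.eq_of_length_eq_zero hl
      exact absurd h1.2 (hau ▸ lt_irrefl _)
    have hmem : s(b, u) ∈ q.edges := by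
      rcases hd : d.edges with _ | ⟨e, l⟩
      · rw [hd] at hE
        simp only [List.nil_append, List.cons.injEq] at hE
        exact absurd hE.2 hqne
      · rw [hd] at hE
        simp only [List.cons_append, List.cons.injEq] at hE
        rw [hE.2]
        exact List.mem_append_right _ (by simp)
    rw [Walk.edges_cons, List.nodup_cons] at hnd
    have heq : s(u, a) = s(b, u) := by rw [hab]; exact Sym2.eq_swap
    exact hnd.1 (heq ▸ hmem)

/-- the `(p,q)`-broom graph is a tree; in particular it has `p + q`
vertices and `p + q - 1` edges. -/
theorem broomGraph_isTree (p q : ℕ) (hp : 2 ≤ p) (hq : 2 ≤ q) :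
    (broomGraph p q).IsTree ∧ Fintype.card (Fin p ⊕ Fin q) = p + q ∧
      (broomGraph p q).edgeSet.ncard = p + q - 1 := by
  classical
  have hp0 : 0 < p := by omega
  have hq0 : 0 < q := by omega
  have hpz : (2:ℤ) ≤ (p:ℤ) := by exact_mod_cast hp
  have hqz : (2:ℤ) ≤ (q:ℤ) := by exact_mod_cast hq
  set G := broomGraph p q with hG
  -- index functions
  have Fprop : ∀ i : Fin p, ∃ j : Fin q, ((j:ℕ):ℤ) = broomF (p:ℤ) (q:ℤ) (((i:ℕ):ℤ)+1) - 1 := by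
    intro i
    have hi1 : (1:ℤ) ≤ ((i:ℕ):ℤ)+1 := by omega
    have hip : ((i:ℕ):ℤ)+1 ≤ (p:ℤ) := by
      have := i.isLt
      omega
    obtain ⟨hb1, hb2⟩ := broomF_bounds hpz hqz hi1 hip
    refine ⟨⟨(broomF (p:ℤ) (q:ℤ) (((i:ℕ):ℤ)+1) - 1).toNat, by omega⟩, by simp; omega⟩
  have Gprop : ∀ j : Fin q, 1 ≤ (j:ℕ) →
      ∃ i : Fin p, ((i:ℕ):ℤ) = broomG (p:ℤ) (q:ℤ) (((j:ℕ):ℤ)+1) - 1 := by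
    intro j hj
    have hj2 : (2:ℤ) ≤ ((j:ℕ):ℤ)+1 := by omega
    have hjq : ((j:ℕ):ℤ)+1 ≤ (q:ℤ) := by
      have := j.isLt
      omega
    obtain ⟨hb1, hb2⟩ := broomG_bounds hpz hqz hj2 hjq
    refine ⟨⟨(broomG (p:ℤ) (q:ℤ) (((j:ℕ):ℤ)+1) - 1).toNat, by omega⟩, by simp; omega⟩
  choose F hF using Fprop
  choose Gf hGf using Gprop
  -- rank function
  set rank : Fin p ⊕ Fin q → ℕ :=
    Sum.elim (fun i => 2 * ((i:ℕ) * (q-1)) + 1) (fun j => 2 * ((j:ℕ) * (p-1))) with hrank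
  set parent : Fin p ⊕ Fin q → Fin p ⊕ Fin q :=
    Sum.elim (fun i => Sum.inr (F i))
      (fun j => if hj : 1 ≤ (j:ℕ) then Sum.inl (Gf j hj) else Sum.inr j) with hparent
  -- rank inequalities
  have hrankF : ∀ i : Fin p, rank (Sum.inr (F i)) < rank (Sum.inl i) := by
    intro i
    have hkey := broomF_key (q := (q:ℤ)) (i := ((i:ℕ):ℤ)+1) hpz
    rw [← hF i] at hkey
    have hn : ((F i:ℕ)) * (p-1) ≤ (i:ℕ) * (q-1) := by
      zify [show 1 ≤ p by omega, show 1 ≤ q by omega]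
      calc ((F i:ℕ):ℤ) * ((p:ℤ)-1) ≤ (((i:ℕ):ℤ)+1-1) * ((q:ℤ)-1) := by linarith
        _ = ((i:ℕ):ℤ) * ((q:ℤ)-1) := by ring
    simp only [hrank, Sum.elim_inl, Sum.elim_inr]
    have := Nat.mul_le_mul_left 2 hn
    omega
  have hrankG : ∀ (j : Fin q) (hj : 1 ≤ (j:ℕ)), rank (Sum.inl (Gf j hj)) < rank (Sum.inr j) := by
    intro j hj
    have hkey := broomG_key (p := (p:ℤ)) (j := ((j:ℕ):ℤ)+1) hqz
    rw [← hGf j hj] at hkey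
    have hn : ((Gf j hj:ℕ)) * (q-1) < (j:ℕ) * (p-1) := by
      zify [show 1 ≤ p by omega, show 1 ≤ q by omega]
      calc ((Gf j hj:ℕ):ℤ) * ((q:ℤ)-1) < (((j:ℕ):ℤ)+1-1) * ((p:ℤ)-1) := by linarith
        _ = ((j:ℕ):ℤ) * ((p:ℤ)-1) := by ring
    simp only [hrank, Sum.elim_inl, Sum.elim_inr]
    have := Nat.mul_le_mul_left 2 hn
    omega
  -- adjacency facts
  have hadjF : ∀ i : Fin p, G.Adj (Sum.inl i) (Sum.inr (F i)) := by
    intro i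
    refine ⟨i, F i, Or.inl ⟨rfl, rfl⟩, Or.inl ⟨by push_cast; omega, ?_, ?_⟩⟩
    · have := i.isLt
      push_cast
      omega
    · have := hF i
      push_cast at this ⊢
      omega
  have hadjG : ∀ (j : Fin q) (hj : 1 ≤ (j:ℕ)), G.Adj (Sum.inr j) (Sum.inl (Gf j hj)) := by
    intro j hj
    refine ⟨Gf j hj, j, Or.inr ⟨rfl, rfl⟩, Or.inr ⟨by push_cast; omega, ?_, ?_⟩⟩
    · have := j.isLt
      push_cast
      omega
    · have := hGf j hj
      push_cast at this ⊢
      omega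
  -- key parent property
  have hkey : ∀ ⦃x y⦄, G.Adj x y →
      (y = parent x ∧ rank y < rank x) ∨ (x = parent y ∧ rank x < rank y) := by
    rintro x y ⟨i, j, hxy, he⟩
    have main : (Sum.inr j = parent (Sum.inl i) ∧ rank (Sum.inr j) < rank (Sum.inl i)) ∨
        (Sum.inl i = parent (Sum.inr j) ∧ rank (Sum.inl i) < rank (Sum.inr j)) := by
      rcases he with ⟨h1, h2, h3⟩ | ⟨h1, h2, h3⟩
      · left
        have hji : j = F i := by
          apply Fin.ext
          have := hF i
          push_cast at h3 this
          omega
        constructor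
        · simp only [hparent, Sum.elim_inl]
          rw [hji]
        · rw [hji]; exact hrankF i
      · right
        have hj1 : 1 ≤ (j:ℕ) := by
          push_cast at h1
          omega
        have hij : i = Gf j hj1 := by
          apply Fin.ext
          have := hGf j hj1
          push_cast at h3 this
          omega
        constructor
        · simp only [hparent, Sum.elim_inr, dif_pos hj1]
          rw [hij]
        · rw [hij]; exact hrankG j hj1
    rcases hxy with ⟨rfl, rfl⟩ | ⟨rfl, rfl⟩
    · exact main
    · exact main.symm
  -- connectivity
  have root : Fin p ⊕ Fin q := Sum.inr ⟨0, hq0⟩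
  have hreach : ∀ n (x : Fin p ⊕ Fin q), rank x = n → G.Reachable x (Sum.inr ⟨0, hq0⟩) := by
    intro n
    induction n using Nat.strong_induction_on with
    | _ n ih =>
      rintro (i | j) hx
      · refine ((hadjF i).reachable).trans (ih (rank (Sum.inr (F i))) ?_ _ rfl)
        rw [← hx]
        exact hrankF i
      · by_cases hj : 1 ≤ (j:ℕ)
        · refine ((hadjG j hj).reachable).trans (ih (rank (Sum.inl (Gf j hj))) ?_ _ rfl)
          rw [← hx]
          exact hrankG j hj
        · have : j = ⟨0, hq0⟩ := Fin.ext (by simp only [Fin.val_mk]; omega)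
          rw [this]
  have hconn : G.Connected := by
    have : Nonempty (Fin p ⊕ Fin q) := ⟨root⟩
    exact SimpleGraph.Connected.mk fun x y =>
      (hreach _ x rfl).trans (hreach _ y rfl).symm
  have htree : G.IsTree := ⟨hconn, isAcyclic_of_parent parent rank hkey⟩
  refine ⟨htree, by simp, ?_⟩
  haveI : Fintype G.edgeSet := Fintype.ofFinite _
  have hcard := htree.card_edgeFinset
  rw [Fintype.card_sum, Fintype.card_fin, Fintype.card_fin] at hcard
  rw [Set.ncard_eq_toFinset_card']
  have : G.edgeFinset = G.edgeSet.toFinset := rfl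
  rw [← this]
  omega
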